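/- Let φ : ℝⁿ → ℝ be continuously differentiable with L-Lipschitz gradient, α > 0, ρ ≥ 0, and let f : ℝⁿ → ℝ. Given x_{k−1}, x_k ∈ ℝⁿ, set y_k = x_k + ρ(∇φ(x_{k−1}) − ∇φ(x_k)) and let x_{k+1} be a minimizer of x ↦ (1/(2α))‖x − y_k‖² + ⟨∇φ(x_k), x − y_k⟩ + f(x). Then f(x_{k+1}) + φ(x_{k+1}) ≤ f(x_k) + φ(x_k) + ((L(α+ρ) − 1)/(2α))‖x_{k+1} − x_k‖² + (Lρ/(2α))‖x_k − x_{k−1}‖². -/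

import Mathlib

open RealInnerProductSpace Gradient

lemma grad_fderiv {n : ℕ} (φ : EuclideanSpace ℝ (Fin n) → ℝ) (hφ : ContDiff ℝ 1 φ)
    (x v : EuclideanSpace ℝ (Fin n)) : fderiv ℝ φ x v = ⟪∇ φ x, v⟫ := by
  rw [gradient, InnerProductSpace.toDual_symm_apply]

lemma descent {n : ℕ} (φ : EuclideanSpace ℝ (Fin n) → ℝ) (L : ℝ) (hL : 0 < L)
    (hφ : ContDiff ℝ 1 φ)
    (hLip : ∀ x y : EuclideanSpace ℝ (Fin n), ‖∇ φ x - ∇ φ y‖ ≤ L * ‖x - y‖)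
    (x y : EuclideanSpace ℝ (Fin n)) :
    φ y ≤ φ x + ⟪∇ φ x, y - x⟫ + L / 2 * ‖y - x‖ ^ 2 := by
  set s := y - x with hs
  set g : ℝ → ℝ := fun t => φ (x + t • s) - t * ⟪∇ φ x, s⟫ - L / 2 * t ^ 2 * ‖s‖ ^ 2 with hg
  have hdiff : Differentiable ℝ φ := hφ.differentiable one_ne_zero
  have hcurve : ∀ t : ℝ, HasDerivAt (fun t : ℝ => x + t • s) s t := by
    intro t
    simpa using ((hasDerivAt_id t).smul_const s).const_add x
  have hder : ∀ t : ℝ, HasDerivAt g (⟪∇ φ (x + t • s), s⟫ - ⟪∇ φ x, s⟫ - L * t * ‖s‖ ^ 2) t := by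
    intro t
    have h1 : HasDerivAt (fun t : ℝ => φ (x + t • s)) (fderiv ℝ φ (x + t • s) s) t :=
      (hdiff (x + t • s)).hasFDerivAt.comp_hasDerivAt t (hcurve t)
    rw [grad_fderiv φ hφ] at h1
    have h2 : HasDerivAt (fun t : ℝ => t * ⟪∇ φ x, s⟫) ⟪∇ φ x, s⟫ t := by
      simpa using (hasDerivAt_id t).mul_const ⟪∇ φ x, s⟫
    have h3 : HasDerivAt (fun t : ℝ => L / 2 * t ^ 2 * ‖s‖ ^ 2) (L * t * ‖s‖ ^ 2) t := by
      have := ((hasDerivAt_pow 2 t).const_mul (L / 2)).mul_const (‖s‖ ^ 2)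
      exact this.congr_deriv (by push_cast; ring)
    exact (h1.sub h2).sub h3
  have hmono : AntitoneOn g (Set.Icc 0 1) := by
    apply antitoneOn_of_deriv_nonpos (convex_Icc 0 1)
    · exact (Differentiable.continuous (fun t => (hder t).differentiableAt)).continuousOn
    · intro t _
      exact (hder t).differentiableAt.differentiableWithinAt
    · intro t ht
      rw [interior_Icc] at ht
      rw [(hder t).deriv]
      have h1 : ⟪∇ φ (x + t • s) - ∇ φ x, s⟫ ≤ ‖∇ φ (x + t • s) - ∇ φ x‖ * ‖s‖ :=
        real_inner_le_norm _ _
      have h2 : ‖∇ φ (x + t • s) - ∇ φ x‖ ≤ L * ‖(x + t • s) - x‖ := hLip _ _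
      have h3 : ‖(x + t • s) - x‖ = t * ‖s‖ := by
        rw [add_sub_cancel_left, norm_smul, Real.norm_eq_abs, abs_of_nonneg ht.1.le]
      rw [inner_sub_left] at h1
      rw [h3] at h2
      have h5 := mul_le_mul_of_nonneg_right h2 (norm_nonneg s)
      nlinarith [h1, h5]
  have h01 := hmono (Set.mem_Icc.2 ⟨le_refl 0, zero_le_one⟩) (Set.mem_Icc.2 ⟨zero_le_one, le_rfl⟩) zero_le_one
  simp only [hg, zero_smul, add_zero, one_smul, zero_mul, zero_pow, mul_zero, sub_zero,
    one_mul, one_pow, mul_one] at h01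
  have : x + s = y := by rw [hs]; abel
  rw [this] at h01
  linarith

set_option maxHeartbeats 1000000 in
theorem stmt_2 {n : ℕ} (φ f : EuclideanSpace ℝ (Fin n) → ℝ)
    (L α ρ : ℝ) (hL : 0 < L) (hα : 0 < α) (hρ : 0 ≤ ρ)
    (hφ : ContDiff ℝ 1 φ)
    (hLip : ∀ x y : EuclideanSpace ℝ (Fin n), ‖∇ φ x - ∇ φ y‖ ≤ L * ‖x - y‖)
    (xkm1 xk xk1 yk : EuclideanSpace ℝ (Fin n))
    (hyk : yk = xk + ρ • (∇ φ xkm1 - ∇ φ xk))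
    (hmin : ∀ x : EuclideanSpace ℝ (Fin n),
      (1 / (2 * α)) * ‖xk1 - yk‖ ^ 2 + ⟪∇ φ xk, xk1 - yk⟫ + f xk1 ≤
        (1 / (2 * α)) * ‖x - yk‖ ^ 2 + ⟪∇ φ xk, x - yk⟫ + f x) :
    f xk1 + φ xk1 ≤ f xk + φ xk
      + ((L * (α + ρ) - 1) / (2 * α)) * ‖xk1 - xk‖ ^ 2
      + (L * ρ / (2 * α)) * ‖xk - xkm1‖ ^ 2 := by
  set s := xk1 - xk with hs
  set d := ρ • (∇ φ xkm1 - ∇ φ xk) with hd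
  have hxky : xk - yk = -d := by rw [hyk]; abel
  have hxk1y : xk1 - yk = s - d := by rw [hyk, hs, hd]; abel
  have hmin' := hmin xk
  rw [hxky, hxk1y] at hmin'
  -- expand norms and inners
  have e1 : ‖s - d‖ ^ 2 = ‖s‖ ^ 2 - 2 * ⟪s, d⟫ + ‖d‖ ^ 2 := by
    rw [norm_sub_sq_real]
  have e2 : ‖(-d : EuclideanSpace ℝ (Fin n))‖ ^ 2 = ‖d‖ ^ 2 := by rw [norm_neg]
  have e3 : ⟪∇ φ xk, s - d⟫ = ⟪∇ φ xk, s⟫ - ⟪∇ φ xk, d⟫ := inner_sub_right _ _ _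
  have e4 : ⟪∇ φ xk, (-d : EuclideanSpace ℝ (Fin n))⟫ = -⟪∇ φ xk, d⟫ := inner_neg_right _ _
  -- descent lemma
  have hdesc := descent φ L hL hφ hLip xk xk1
  rw [← hs] at hdesc
  -- bound on inner s d
  have hbound : ⟪s, d⟫ ≤ L * ρ / 2 * (‖s‖ ^ 2 + ‖xk - xkm1‖ ^ 2) := by
    have h1 : ⟪s, d⟫ ≤ ‖s‖ * ‖d‖ := real_inner_le_norm _ _
    have h2 : ‖d‖ = ρ * ‖∇ φ xkm1 - ∇ φ xk‖ := by
      rw [hd, norm_smul, Real.norm_eq_abs, abs_of_nonneg hρ]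
    have h3 : ‖∇ φ xkm1 - ∇ φ xk‖ ≤ L * ‖xkm1 - xk‖ := hLip _ _
    have h4 : ‖xkm1 - xk‖ = ‖xk - xkm1‖ := norm_sub_rev _ _
    rw [h4] at h3
    have h5 : ‖d‖ ≤ ρ * (L * ‖xk - xkm1‖) := by
      rw [h2]; exact mul_le_mul_of_nonneg_left h3 hρ
    have h6 := mul_le_mul_of_nonneg_left h5 (norm_nonneg s)
    nlinarith [h1, h6, mul_nonneg (mul_nonneg hL.le hρ) (sq_nonneg (‖s‖ - ‖xk - xkm1‖))]
  rw [e1, e2, e3, e4] at hmin'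
  have hα' : 0 < 2 * α := by linarith
  have key : (1 / (2 * α)) * (2 * ⟪s, d⟫ - ‖s‖ ^ 2) ≤
      (1 / (2 * α)) * (L * ρ * (‖s‖ ^ 2 + ‖xk - xkm1‖ ^ 2) - ‖s‖ ^ 2) := by
    apply mul_le_mul_of_nonneg_left _ (by positivity)
    linarith
  have final : f xk1 - f xk ≤ (1 / (2 * α)) * (2 * ⟪s, d⟫ - ‖s‖ ^ 2) - ⟪∇ φ xk, s⟫ := by
    nlinarith [hmin']
  have expand : ((L * (α + ρ) - 1) / (2 * α)) * ‖s‖ ^ 2 + (L * ρ / (2 * α)) * ‖xk - xkm1‖ ^ 2 =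
      (1 / (2 * α)) * (L * ρ * (‖s‖ ^ 2 + ‖xk - xkm1‖ ^ 2) - ‖s‖ ^ 2) + L / 2 * ‖s‖ ^ 2 := by
    field_simp
    ring
  linarith [final, key, hdesc, expand.ge]
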